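/- Let n ≥ 2, let 1 ≤ k < l ≤ n be integers, and let κ ∈ ℝ^n satisfy σ_i(κ) > 0 for all 1 ≤ i ≤ l. Then equality H_{k-1}(κ)·H_l(κ) = H_k(κ)·H_{l-1}(κ) holds if and only if there exists a constant c > 0 such that κ_i = c for all i, i.e., κ = c·(1,…,1). -/

import Mathlib

open Finset Polynomial

/-- The `r`-th elementary symmetric polynomial of `κ = (κ_1, …, κ_n)`. -/
noncomputable def esymm (n : ℕ) (κ : Fin n → ℝ) (r : ℕ) : ℝ :=
  ∑ s ∈ powersetCard r (univ : Finset (Fin n)), ∏ i ∈ s, κ i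

lemma nc_choose (m j : ℕ) (hm : 1 ≤ m) :
    (m - j) * m.choose j = m * (m - 1).choose j := by
  have h1 := Nat.add_one_mul_choose_eq (m - 1) j
  rw [Nat.sub_add_cancel hm] at h1
  have h2 := Nat.choose_succ_right_eq m j
  rw [h1, h2, Nat.mul_comm]

lemma esymm_compl (m j : ℕ) (hj : j ≤ m) (ν : Fin m → ℝ) :
    esymm m ν (m - j) = ∑ u ∈ powersetCard j (univ : Finset (Fin m)), ∏ k ∈ uᶜ, ν k := by
  unfold esymm
  refine Finset.sum_nbij' (fun u => uᶜ) (fun u => uᶜ) ?_ ?_ ?_ ?_ ?_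
  · intro u hu
    rw [mem_powersetCard_univ] at hu ⊢
    rw [card_compl, Fintype.card_fin, hu]; omega
  · intro u hu
    rw [mem_powersetCard_univ] at hu ⊢
    rw [card_compl, Fintype.card_fin, hu]
  · intro u _; simp
  · intro u _; simp
  · intro u _; rw [compl_compl]

lemma esymm_top (m : ℕ) (ν : Fin m → ℝ) : esymm m ν m = ∏ k, ν k := by
  unfold esymm
  have h : powersetCard m (univ : Finset (Fin m)) = {univ} := by
    simpa using powersetCard_self (univ : Finset (Fin m))
  rw [h, sum_singleton]

lemma esymm_sub_one (m : ℕ) (hm : 1 ≤ m) (ν : Fin m → ℝ) :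
    esymm m ν (m - 1) = ∑ i, ∏ k ∈ ({i} : Finset (Fin m))ᶜ, ν k := by
  rw [esymm_compl m 1 hm ν, powersetCard_one, sum_map]
  rfl

lemma pair_eq_of_mem_offDiag {m : ℕ} {u : Finset (Fin m)} (hu : u.card = 2)
    {p : Fin m × Fin m} (hp : p ∈ u.offDiag) : ({p.1, p.2} : Finset (Fin m)) = u := by
  rw [mem_offDiag] at hp
  refine Finset.eq_of_subset_of_card_le ?_ ?_
  · intro x hx
    rcases Finset.mem_insert.1 hx with h | h
    · exact h ▸ hp.1
    · exact (Finset.mem_singleton.1 h) ▸ hp.2.1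
  · rw [hu, card_pair hp.2.2]

lemma sum_offDiag_pair (m : ℕ) (g : Finset (Fin m) → ℝ) :
    ∑ p ∈ (univ : Finset (Fin m)).offDiag, g {p.1, p.2}
      = 2 * ∑ u ∈ powersetCard 2 (univ : Finset (Fin m)), g u := by
  have hcov : (univ : Finset (Fin m)).offDiag
      = (powersetCard 2 (univ : Finset (Fin m))).biUnion (fun u => u.offDiag) := by
    ext p
    simp only [mem_biUnion, mem_offDiag, mem_powersetCard_univ, mem_univ, true_and]
    constructor
    · intro hne
      exact ⟨{p.1, p.2}, card_pair hne, by simp, by simp, hne⟩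
    · rintro ⟨u, -, hp⟩
      exact hp.2.2
  rw [hcov, sum_biUnion]
  · rw [Finset.mul_sum]
    refine Finset.sum_congr rfl fun u hu => ?_
    rw [mem_powersetCard_univ] at hu
    have h1 : ∀ p ∈ u.offDiag, g {p.1, p.2} = g u := fun p hp => by
      rw [pair_eq_of_mem_offDiag hu hp]
    rw [Finset.sum_congr rfl h1, Finset.sum_const, Finset.offDiag_card, hu]
    norm_num
  · intro u hu v hv huv
    rw [Finset.mem_coe, mem_powersetCard_univ] at hu hv
    refine Finset.disjoint_left.2 fun p hp1 hp2 => huv ?_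
    rw [← pair_eq_of_mem_offDiag hu hp1, ← pair_eq_of_mem_offDiag hv hp2]

lemma sum_offDiag_mul (m : ℕ) (f g : Fin m → ℝ) :
    ∑ p ∈ (univ : Finset (Fin m)).offDiag, f p.1 * g p.2
      = (∑ i, f i) * (∑ i, g i) - ∑ i, f i * g i := by
  have hdiag : ∑ p ∈ (univ : Finset (Fin m)).diag, f p.1 * g p.2 = ∑ i, f i * g i := by
    refine Finset.sum_nbij' (fun p => p.1) (fun i => (i, i)) ?_ ?_ ?_ ?_ ?_
    · intro p _; exact mem_univ _
    · intro i _; exact Finset.mem_diag.2 ⟨mem_univ _, rfl⟩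
    · intro p hp
      obtain ⟨-, h2⟩ := Finset.mem_diag.1 hp
      exact Prod.ext rfl h2
    · intro i _; rfl
    · intro p hp
      obtain ⟨-, h2⟩ := Finset.mem_diag.1 hp
      rw [← h2]
  have hprod : ∑ p ∈ ((univ : Finset (Fin m)) ×ˢ univ), f p.1 * g p.2
      = (∑ i, f i) * (∑ i, g i) := by
    rw [Finset.sum_product, Finset.sum_mul_sum]
  rw [← Finset.diag_union_offDiag (univ : Finset (Fin m)),
    Finset.sum_union (Finset.disjoint_diag_offDiag _), hdiag] at hprod
  linarith

lemma sq_sum_eq (m : ℕ) (ν : Fin m → ℝ) :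
    (∑ i, ν i) ^ 2 = (∑ i, ν i ^ 2) + 2 * esymm m ν 2 := by
  have h := sum_offDiag_pair m (fun u => ∏ k ∈ u, ν k)
  have h2 : ∑ p ∈ (univ : Finset (Fin m)).offDiag, (∏ k ∈ ({p.1, p.2} : Finset (Fin m)), ν k)
      = ∑ p ∈ (univ : Finset (Fin m)).offDiag, ν p.1 * ν p.2 := by
    refine Finset.sum_congr rfl fun p hp => ?_
    exact Finset.prod_pair (mem_offDiag.1 hp).2.2
  have h3 := sum_offDiag_mul m ν ν
  have h4 : esymm m ν 2 = ∑ u ∈ powersetCard 2 (univ : Finset (Fin m)), ∏ k ∈ u, ν k := rfl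
  have h5 : ∑ i, ν i * ν i = ∑ i, ν i ^ 2 := by
    refine Finset.sum_congr rfl fun i _ => by ring
  rw [h2, h3, h5] at h
  rw [h4]
  nlinarith [h]

lemma prod_pair_compl {m : ℕ} (i j : Fin m) (hij : i ≠ j) (ν : Fin m → ℝ) :
    (∏ k ∈ ({i} : Finset (Fin m))ᶜ, ν k) * ∏ k ∈ ({j} : Finset (Fin m))ᶜ, ν k
      = (∏ k ∈ ({i, j} : Finset (Fin m))ᶜ, ν k) ^ 2 * ∏ k ∈ ({i, j} : Finset (Fin m)), ν k := by
  have hpair : ∏ k ∈ ({i, j} : Finset (Fin m)), ν k = ν i * ν j := Finset.prod_pair hij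
  have hc1 : ({i, j} : Finset (Fin m))ᶜ = ({i} : Finset (Fin m))ᶜ.erase j := by
    rw [Finset.pair_comm, Finset.compl_insert]
  have hc2 : ({i, j} : Finset (Fin m))ᶜ = ({j} : Finset (Fin m))ᶜ.erase i := by
    rw [Finset.compl_insert]
  have h1 : ∏ k ∈ ({i} : Finset (Fin m))ᶜ, ν k
      = ν j * ∏ k ∈ ({i, j} : Finset (Fin m))ᶜ, ν k := by
    rw [hc1]
    exact (Finset.mul_prod_erase _ _ (by simp [hij.symm])).symm
  have h2 : ∏ k ∈ ({j} : Finset (Fin m))ᶜ, ν k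
      = ν i * ∏ k ∈ ({i, j} : Finset (Fin m))ᶜ, ν k := by
    rw [hc2]
    exact (Finset.mul_prod_erase _ _ (by simp [hij])).symm
  rw [h1, h2, hpair]; ring

lemma base_key (m : ℕ) (hm : 2 ≤ m) (ν : Fin m → ℝ) :
    2 * m * (esymm m ν (m - 2) * esymm m ν m) ≤ (m - 1 : ℝ) * esymm m ν (m - 1) ^ 2
    ∧ (2 * m * (esymm m ν (m - 2) * esymm m ν m) = (m - 1 : ℝ) * esymm m ν (m - 1) ^ 2 →
        esymm m ν m ≠ 0 → ∃ c : ℝ, ∀ i, ν i = c) := by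
  set P : Fin m → ℝ := fun i => ∏ k ∈ ({i} : Finset (Fin m))ᶜ, ν k with hP
  have hT : esymm m ν (m - 1) = ∑ i, P i := esymm_sub_one m (by omega) ν
  have hE2 : esymm m ν (m - 2) * esymm m ν m
      = ∑ u ∈ powersetCard 2 (univ : Finset (Fin m)), (∏ k ∈ uᶜ, ν k) ^ 2 * ∏ k ∈ u, ν k := by
    rw [esymm_compl m 2 hm ν, esymm_top, Finset.sum_mul]
    refine Finset.sum_congr rfl fun u _ => ?_
    rw [← Finset.prod_compl_mul_prod u ν]; ring
  have hoffE : ∑ p ∈ (univ : Finset (Fin m)).offDiag, P p.1 * P p.2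
      = 2 * (esymm m ν (m - 2) * esymm m ν m) := by
    rw [hE2, ← sum_offDiag_pair m (fun u => (∏ k ∈ uᶜ, ν k) ^ 2 * ∏ k ∈ u, ν k)]
    refine Finset.sum_congr rfl fun p hp => ?_
    exact prod_pair_compl p.1 p.2 (mem_offDiag.1 hp).2.2 ν
  have hoffT : ∑ p ∈ (univ : Finset (Fin m)).offDiag, P p.1 * P p.2
      = (∑ i, P i) * (∑ i, P i) - ∑ i, P i * P i := sum_offDiag_mul m P P
  have hfst : ∑ p ∈ (univ : Finset (Fin m)).offDiag, P p.1 * P p.1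
      = m * (∑ i, P i * P i) - ∑ i, P i * P i := by
    have h := sum_offDiag_mul m (fun i => P i * P i) (fun _ => (1:ℝ))
    simp only [mul_one, Finset.sum_const, card_univ, Fintype.card_fin, nsmul_eq_mul] at h
    rw [h]; ring
  have hsnd : ∑ p ∈ (univ : Finset (Fin m)).offDiag, P p.2 * P p.2
      = m * (∑ i, P i * P i) - ∑ i, P i * P i := by
    have h := sum_offDiag_mul m (fun _ => (1:ℝ)) (fun i => P i * P i)
    simp only [one_mul, Finset.sum_const, card_univ, Fintype.card_fin, nsmul_eq_mul] at h
    rw [h]; ring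
  have hD : ∑ p ∈ (univ : Finset (Fin m)).offDiag, (P p.1 - P p.2) ^ 2
      = 2 * m * (∑ i, P i * P i) - 2 * ((∑ i, P i) * (∑ i, P i)) := by
    have e1 : ∀ p ∈ (univ : Finset (Fin m)).offDiag, (P p.1 - P p.2) ^ 2
        = P p.1 * P p.1 + P p.2 * P p.2 - 2 * (P p.1 * P p.2) := by
      intro p _; ring
    rw [Finset.sum_congr rfl e1, Finset.sum_sub_distrib, Finset.sum_add_distrib,
      ← Finset.mul_sum, hfst, hsnd, hoffT]
    ring
  have hDnn : (0:ℝ) ≤ ∑ p ∈ (univ : Finset (Fin m)).offDiag, (P p.1 - P p.2) ^ 2 :=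
    Finset.sum_nonneg fun p _ => sq_nonneg _
  have hkey : (m - 1 : ℝ) * esymm m ν (m - 1) ^ 2 - 2 * m * (esymm m ν (m - 2) * esymm m ν m)
      = (1 / 2) * ∑ p ∈ (univ : Finset (Fin m)).offDiag, (P p.1 - P p.2) ^ 2 := by
    have h2E : 2 * (esymm m ν (m - 2) * esymm m ν m)
        = (∑ i, P i) * (∑ i, P i) - ∑ i, P i * P i := by rw [← hoffE, hoffT]
    rw [hT, hD]
    nlinarith [h2E]
  constructor
  · nlinarith [hkey, hDnn]
  · intro heq hne
    have hDzero : ∑ p ∈ (univ : Finset (Fin m)).offDiag, (P p.1 - P p.2) ^ 2 = 0 := by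
      nlinarith [hkey]
    have hPeq : ∀ i j : Fin m, P i = P j := by
      intro i j
      rcases eq_or_ne i j with h | h
      · rw [h]
      · have hmem : (i, j) ∈ (univ : Finset (Fin m)).offDiag :=
          mem_offDiag.2 ⟨mem_univ _, mem_univ _, h⟩
        have := (Finset.sum_eq_zero_iff_of_nonneg fun p _ => sq_nonneg ((P p.1 - P p.2))).1
          hDzero (i, j) hmem
        have : P i - P j = 0 := by
          have := sq_eq_zero_iff.1 this
          exact this
        linarith
    have hνP : ∀ i, ν i * P i = esymm m ν m := by
      intro i
      rw [esymm_top]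
      have hcompl : ({i} : Finset (Fin m))ᶜ = univ.erase i := by
        ext x; simp [eq_comm]
      rw [hP]
      simp only
      rw [hcompl]
      exact Finset.mul_prod_erase univ ν (mem_univ i)
    have i0 : Fin m := ⟨0, by omega⟩
    have hP0 : P i0 ≠ 0 := by
      intro h
      apply hne
      rw [← hνP i0, h, mul_zero]
    refine ⟨esymm m ν m / P i0, fun i => ?_⟩
    rw [← hνP i, hPeq i i0]
    field_simp

lemma esymm_const (n j : ℕ) (c : ℝ) : esymm n (fun _ => c) j = (n.choose j : ℝ) * c ^ j := by
  unfold esymm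
  have h : ∀ u ∈ powersetCard j (univ : Finset (Fin n)), (∏ _i ∈ u, c) = c ^ j := by
    intro u hu
    rw [Finset.prod_const, mem_powersetCard_univ.1 hu]
  rw [Finset.sum_congr rfl h, Finset.sum_const, Finset.card_powersetCard, card_univ,
    Fintype.card_fin, nsmul_eq_mul]

lemma esymm_one_fin (m : ℕ) (ν : Fin m → ℝ) : esymm m ν 1 = ∑ i, ν i := by
  unfold esymm
  rw [powersetCard_one, sum_map]
  simp

lemma ascent (m : ℕ) (hm : 1 ≤ m) (ν : Fin m → ℝ) (c : ℝ) (h1 : esymm m ν 1 = m * c)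
    (h2 : esymm m ν 2 = (m.choose 2 : ℝ) * c ^ 2) : ∀ i, ν i = c := by
  have hT : ∑ i, ν i = m * c := by rw [← esymm_one_fin]; exact h1
  have hsq := sq_sum_eq m ν
  have h2C : (m.choose 2 : ℕ) * 2 = m * (m - 1) := by
    have h := Nat.add_one_mul_choose_eq (m - 1) 1
    simp only [Nat.succ_eq_add_one, Nat.sub_add_cancel hm, Nat.choose_one_right] at h
    norm_num at h
    omega
  have h2C' : (m.choose 2 : ℝ) * 2 = m * (m - 1) := by
    have := congrArg (fun x : ℕ => (x : ℝ)) h2C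
    push_cast [Nat.cast_sub hm] at this
    push_cast
    linarith
  have key : ∑ i, (ν i - c) ^ 2 = 0 := by
    have expand : ∑ i, (ν i - c) ^ 2 = (∑ i, ν i ^ 2) - 2 * c * (∑ i, ν i) + m * c ^ 2 := by
      have e : ∀ i ∈ (univ : Finset (Fin m)), (ν i - c) ^ 2 = ν i ^ 2 - 2 * c * ν i + c ^ 2 := by
        intro i _; ring
      rw [Finset.sum_congr rfl e, Finset.sum_add_distrib, Finset.sum_sub_distrib,
        ← Finset.mul_sum, Finset.sum_const, card_univ, Fintype.card_fin, nsmul_eq_mul]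
    rw [expand]
    linear_combination (-1 : ℝ) * hsq + ((∑ i, ν i) + (m:ℝ) * c - 2 * c) * hT - 2 * h2
      - c ^ 2 * h2C'
  intro i
  have hnn : ∀ i ∈ (univ : Finset (Fin m)), (0:ℝ) ≤ (ν i - c) ^ 2 := fun i _ => sq_nonneg _
  have := (Finset.sum_eq_zero_iff_of_nonneg hnn).1 key i (mem_univ i)
  have := sq_eq_zero_iff.1 this
  linarith

lemma esymm_coe (l : List ℝ) (j : ℕ) :
    Multiset.esymm (↑l) j = esymm l.length l.get j := by
  have h := Finset.esymm_map_val l.get (univ : Finset (Fin l.length)) j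
  rw [Fin.univ_val_map, List.ofFn_get] at h
  rw [h]
  rfl

lemma esymm_replicate (m j : ℕ) (c : ℝ) :
    Multiset.esymm (Multiset.replicate m c) j = (m.choose j : ℝ) * c ^ j := by
  rw [← Multiset.coe_replicate]
  rw [esymm_coe]
  have hget : (List.replicate m c).get = fun i => c := by
    funext i
    simp
  rw [hget]
  have hlen : (List.replicate m c).length = m := List.length_replicate
  have : esymm (List.replicate m c).length (fun _ => c) j
      = (((List.replicate m c).length).choose j : ℝ) * c ^ j := esymm_const _ j c
  rw [this, hlen]

lemma deriv_step (s : Multiset ℝ) (hs : 2 ≤ Multiset.card s) :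
    ∃ t : Multiset ℝ, Multiset.card t = Multiset.card s - 1 ∧
      ∀ j : ℕ, j ≤ Multiset.card s - 1 →
        (Multiset.card s : ℝ) * Multiset.esymm t j
          = ((Multiset.card s - j : ℕ) : ℝ) * Multiset.esymm s j := by
  set m := Multiset.card s with hm
  set p : ℝ[X] := (s.map fun a => X - C a).prod with hp
  have hmonic : p.Monic := monic_multiset_prod_of_monic _ _ fun a _ => monic_X_sub_C a
  have hdeg : p.natDegree = m := natDegree_multiset_prod_X_sub_C_eq_card s
  have hroots : p.roots = s := roots_multiset_prod_X_sub_C s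
  set q : ℝ[X] := derivative p with hq
  have hqlead : q.coeff (m - 1) = m := by
    rw [hq, coeff_derivative]
    have e1 : m - 1 + 1 = m := by omega
    rw [e1, ← hdeg, hmonic.coeff_natDegree, hdeg]
    have : ((m - 1 : ℕ) : ℝ) + 1 = m := by
      push_cast [Nat.cast_sub (by omega : 1 ≤ m)]; ring
    rw [this, one_mul]
  have hqdeg : q.natDegree = m - 1 := by
    refine le_antisymm (le_trans (natDegree_derivative_le p) (by omega)) ?_
    refine le_natDegree_of_ne_zero ?_
    rw [hqlead]
    exact_mod_cast (by omega : (m:ℕ) ≠ 0)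
  have hcard : Multiset.card q.roots = m - 1 := by
    have h1 := Polynomial.card_roots_le_derivative p
    have h2 := Polynomial.card_roots' q
    rw [← hq, hroots, ← hm] at h1
    rw [hqdeg] at h2
    omega
  refine ⟨q.roots, hcard, ?_⟩
  intro j hj
  have hlead : q.leadingCoeff = (m : ℝ) := by
    rw [Polynomial.leadingCoeff, hqdeg, hqlead]
  have hcoeff := Polynomial.coeff_eq_esymm_roots_of_card
    (p := q) (hcard.trans hqdeg.symm) (k := m - 1 - j) (by omega)
  rw [hqdeg, hlead] at hcoeff
  have harith : m - 1 - (m - 1 - j) = j := by omega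
  rw [harith] at hcoeff
  have hd : q.coeff (m - 1 - j) = p.coeff (m - j) * ((m - j : ℕ) : ℝ) := by
    rw [hq, coeff_derivative]
    have e1 : m - 1 - j + 1 = m - j := by omega
    rw [e1]
    congr 1
    push_cast [Nat.cast_sub (by omega : j ≤ m), Nat.cast_sub (by omega : j ≤ m - 1),
      Nat.cast_sub (by omega : 1 ≤ m)]
    ring
  have hvieta : p.coeff (m - j) = (-1 : ℝ) ^ j * Multiset.esymm s j := by
    have h := Multiset.prod_X_sub_C_coeff s (k := m - j) (by omega)
    rw [← hp, ← hm] at h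
    have e : m - (m - j) = j := by omega
    rw [e] at h
    exact h
  rw [hvieta] at hd
  have hcomb : ((-1 : ℝ)) ^ j * ((m : ℝ) * Multiset.esymm q.roots j)
      = (-1 : ℝ) ^ j * (((m - j : ℕ) : ℝ) * Multiset.esymm s j) := by
    have := hcoeff.symm.trans hd
    linear_combination this
  have hne : ((-1 : ℝ)) ^ j ≠ 0 := pow_ne_zero _ (by norm_num)
  exact mul_left_cancel₀ hne hcomb

noncomputable def MH (s : Multiset ℝ) (r : ℕ) : ℝ :=
  Multiset.esymm s r / ((Multiset.card s).choose r)

lemma choose2_mul_two (m : ℕ) (hm : 1 ≤ m) : m.choose 2 * 2 = m * (m - 1) := by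
  have h := Nat.add_one_mul_choose_eq (m - 1) 1
  simp only [Nat.succ_eq_add_one, Nat.sub_add_cancel hm, Nat.choose_one_right] at h
  norm_num at h
  omega

lemma newton_main (r : ℕ) (hr : 1 ≤ r) :
    ∀ m : ℕ, r + 1 ≤ m → ∀ s : Multiset ℝ, Multiset.card s = m →
      (MH s (r - 1) * MH s (r + 1) ≤ MH s r ^ 2 ∧
        (MH s (r - 1) * MH s (r + 1) = MH s r ^ 2 → Multiset.esymm s (r + 1) ≠ 0 →
          ∃ c : ℝ, ∀ x ∈ s, x = c)) := by
  intro m hm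
  induction m, hm using Nat.le_induction with
  | base =>
    intro s hcard
    have hsl : (↑s.toList : Multiset ℝ) = s := s.coe_toList
    set l := s.toList with hldef
    have hlen : l.length = r + 1 := by rw [Multiset.length_toList, hcard]
    have hes : ∀ j, Multiset.esymm s j = esymm l.length l.get j := by
      intro j
      rw [← hsl]
      exact esymm_coe l j
    have hA : Multiset.esymm s (r - 1) = esymm l.length l.get (l.length - 2) := by
      rw [hes, show l.length - 2 = r - 1 by omega]
    have hB : Multiset.esymm s r = esymm l.length l.get (l.length - 1) := by
      rw [hes, show l.length - 1 = r by omega]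
    have hD : Multiset.esymm s (r + 1) = esymm l.length l.get l.length := by
      rw [hes]
      congr 1
      omega
    have hbk := base_key l.length (by omega) l.get
    rw [← hA, ← hB, ← hD] at hbk
    have hlenR : (l.length : ℝ) = (r : ℝ) + 1 := by
      rw [hlen]; push_cast; ring
    rw [hlenR] at hbk
    have hrR : ((r : ℝ) + 1) - 1 = (r : ℝ) := by ring
    rw [hrR] at hbk
    -- choose constants
    have hCA : ((r + 1).choose (r - 1) : ℝ) * 2 = ((r : ℝ) + 1) * r := by
      have h1 : (r + 1).choose (r - 1) = (r + 1).choose 2 := by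
        rw [show r - 1 = (r + 1) - 2 by omega]
        exact Nat.choose_symm (by omega)
      have h2 := choose2_mul_two (r + 1) (by omega)
      rw [Nat.add_sub_cancel] at h2
      rw [h1]
      have h3 := congrArg (fun x : ℕ => (x : ℝ)) h2
      push_cast at h3
      linear_combination h3
    have hCB : ((r + 1).choose r : ℝ) = (r : ℝ) + 1 := by
      rw [Nat.choose_succ_self_right]; push_cast; ring
    have hCD : ((r + 1).choose (r + 1) : ℝ) = 1 := by
      rw [Nat.choose_self]; norm_num
    have hCApos : (0 : ℝ) < ((r + 1).choose (r - 1) : ℝ) := by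
      exact_mod_cast Nat.choose_pos (by omega)
    have hrpos : (0 : ℝ) < (r : ℝ) + 1 := by positivity
    have hMHA : MH s (r - 1) = Multiset.esymm s (r - 1) / ((r + 1).choose (r - 1) : ℝ) := by
      unfold MH; rw [hcard]
    have hMHB : MH s r = Multiset.esymm s r / ((r : ℝ) + 1) := by
      unfold MH; rw [hcard, hCB]
    have hMHD : MH s (r + 1) = Multiset.esymm s (r + 1) := by
      unfold MH; rw [hcard, hCD, div_one]
    constructor
    · rw [hMHA, hMHB, hMHD]
      rw [div_mul_eq_mul_div, div_pow, div_le_div_iff₀ hCApos (by positivity)]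
      have hint := mul_le_mul_of_nonneg_left hbk.1 hrpos.le
      nlinarith [hint, hCA]
    · intro heq hne
      rw [hMHA, hMHB, hMHD] at heq
      rw [div_mul_eq_mul_div, div_pow,
        div_eq_div_iff hCApos.ne' (show ((r:ℝ)+1)^2 ≠ 0 by positivity)] at heq
      have heq2 : 2 * ((r : ℝ) + 1) * (Multiset.esymm s (r - 1) * Multiset.esymm s (r + 1))
          = (r : ℝ) * Multiset.esymm s r ^ 2 := by
        apply mul_left_cancel₀ (show ((r:ℝ)+1) ≠ 0 by positivity)
        linear_combination 2 * heq + Multiset.esymm s r ^ 2 * hCA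
      obtain ⟨c, hc⟩ := hbk.2 heq2 hne
      refine ⟨c, fun x hx => ?_⟩
      rw [← hsl] at hx
      obtain ⟨i, hi⟩ := List.mem_iff_get.1 (Multiset.mem_coe.1 hx)
      rw [← hi]
      exact hc i
  | succ m hm IH =>
    intro s hcard
    obtain ⟨t, htcard, htrans⟩ := deriv_step s (by omega)
    have htc : Multiset.card t = m := by omega
    have hm1ne : ((m : ℝ) + 1) ≠ 0 := by positivity
    have htrans' : ∀ j : ℕ, j ≤ m →
        ((m : ℝ) + 1) * Multiset.esymm t j = (((m + 1 - j : ℕ)) : ℝ) * Multiset.esymm s j := by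
      intro j hj
      have h1 := htrans j (by omega)
      rw [hcard] at h1
      have hcast : ((m + 1 : ℕ) : ℝ) = (m : ℝ) + 1 := by push_cast; ring
      rw [hcast] at h1
      exact h1
    have hMH : ∀ j, j ≤ m → MH t j = MH s j := by
      intro j hj
      unfold MH
      rw [htc, hcard]
      have h1 := htrans' j hj
      have hnc := nc_choose (m + 1) j (by omega)
      have hncR : ((m + 1 - j : ℕ) : ℝ) * ((m + 1).choose j : ℝ)
          = ((m : ℝ) + 1) * ((m).choose j : ℝ) := by
        have hx := congrArg (fun x : ℕ => (x : ℝ)) hnc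
        push_cast at hx
        convert hx using 2 <;> push_cast <;> ring
      have hc1 : (0 : ℝ) < ((m + 1).choose j : ℝ) := by
        exact_mod_cast Nat.choose_pos (by omega)
      have hc2 : (0 : ℝ) < ((m).choose j : ℝ) := by
        exact_mod_cast Nat.choose_pos (by omega)
      rw [div_eq_div_iff hc2.ne' hc1.ne']
      apply mul_left_cancel₀ hm1ne
      linear_combination ((m + 1).choose j : ℝ) * h1 + (Multiset.esymm s j) * hncR
    constructor
    · rw [← hMH (r - 1) (by omega), ← hMH r (by omega), ← hMH (r + 1) (by omega)]
      exact (IH t htc).1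
    · intro heq hne
      have heqt : MH t (r - 1) * MH t (r + 1) = MH t r ^ 2 := by
        rw [hMH (r - 1) (by omega), hMH r (by omega), hMH (r + 1) (by omega)]
        exact heq
      have hnet : Multiset.esymm t (r + 1) ≠ 0 := by
        intro h0
        have h1 := htrans' (r + 1) (by omega)
        rw [h0, mul_zero] at h1
        have hK : ((m + 1 - (r + 1) : ℕ) : ℝ) ≠ 0 := Nat.cast_ne_zero.2 (by omega)
        exact hne ((mul_eq_zero.1 h1.symm).resolve_left hK)
      obtain ⟨c, hc⟩ := (IH t htc).2 heqt hnet
      have ht_rep : t = Multiset.replicate m c := Multiset.eq_replicate.2 ⟨htc, hc⟩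
      have he1t : Multiset.esymm t 1 = (m : ℝ) * c := by
        rw [ht_rep, esymm_replicate, Nat.choose_one_right]; ring
      have he2t : Multiset.esymm t 2 = ((m.choose 2 : ℕ) : ℝ) * c ^ 2 := by
        rw [ht_rep, esymm_replicate]
      have he1s : Multiset.esymm s 1 = ((m : ℝ) + 1) * c := by
        have h1 := htrans' 1 (by omega)
        rw [he1t, show ((m + 1 - 1 : ℕ) : ℝ) = (m : ℝ) by push_cast; ring] at h1
        have hmne : ((m : ℝ)) ≠ 0 := Nat.cast_ne_zero.2 (by omega)
        apply mul_left_cancel₀ hmne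
        linear_combination (-1 : ℝ) * h1
      have he2s : Multiset.esymm s 2 = (((m + 1).choose 2 : ℕ) : ℝ) * c ^ 2 := by
        have h1 := htrans' 2 (by omega)
        rw [he2t, show ((m + 1 - 2 : ℕ) : ℝ) = ((m - 1 : ℕ) : ℝ) by congr 1] at h1
        have hnc := nc_choose (m + 1) 2 (by omega)
        have hncR : ((m + 1 - 2 : ℕ) : ℝ) * ((m + 1).choose 2 : ℝ)
            = ((m : ℝ) + 1) * ((m).choose 2 : ℝ) := by
          have := congrArg (fun x : ℕ => (x : ℝ)) hnc
          push_cast at this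
          convert this using 2 <;> push_cast <;> ring
        rw [show ((m + 1 - 2 : ℕ) : ℝ) = ((m - 1 : ℕ) : ℝ) by congr 1] at hncR
        have hmne : ((m - 1 : ℕ) : ℝ) ≠ 0 := Nat.cast_ne_zero.2 (by omega)
        apply mul_left_cancel₀ hmne
        linear_combination (-1 : ℝ) * h1 - c ^ 2 * hncR
      have hsl : (↑s.toList : Multiset ℝ) = s := s.coe_toList
      set l := s.toList with hldef
      have hlen : l.length = m + 1 := by rw [Multiset.length_toList, hcard]
      have hb1 : esymm l.length l.get 1 = (l.length : ℝ) * c := by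
        have hh : Multiset.esymm s 1 = esymm l.length l.get 1 := by
          rw [← hsl]; exact esymm_coe l 1
        rw [← hh, he1s, hlen]
        push_cast; ring
      have hb2 : esymm l.length l.get 2 = ((l.length.choose 2 : ℕ) : ℝ) * c ^ 2 := by
        have hh : Multiset.esymm s 2 = esymm l.length l.get 2 := by
          rw [← hsl]; exact esymm_coe l 2
        rw [← hh, he2s, hlen]
      have hasc := ascent l.length (by omega) l.get c hb1 hb2
      refine ⟨c, fun x hx => ?_⟩
      rw [← hsl] at hx
      obtain ⟨i, hi⟩ := List.mem_iff_get.1 (Multiset.mem_coe.1 hx)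
      rw [← hi]
      exact hasc i

/-- The normalized `r`-th mean curvature `H_r(κ) = σ_r(κ) / C(n,r)`. -/
noncomputable def Hmc (n : ℕ) (κ : Fin n → ℝ) (r : ℕ) : ℝ :=
  esymm n κ r / (n.choose r)

lemma esymm_eq_multiset (n : ℕ) (κ : Fin n → ℝ) (j : ℕ) :
    Multiset.esymm (Finset.univ.val.map κ) j = esymm n κ j := by
  rw [Finset.esymm_map_val]
  rfl

lemma newton_fin (n r : ℕ) (hr : 1 ≤ r) (hrn : r + 1 ≤ n) (κ : Fin n → ℝ) :
    Hmc n κ (r - 1) * Hmc n κ (r + 1) ≤ Hmc n κ r ^ 2 ∧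
      (Hmc n κ (r - 1) * Hmc n κ (r + 1) = Hmc n κ r ^ 2 → esymm n κ (r + 1) ≠ 0 →
        ∃ c : ℝ, ∀ i, κ i = c) := by
  set s : Multiset ℝ := Finset.univ.val.map κ with hs
  have hcard : Multiset.card s = n := by
    rw [hs, Multiset.card_map]
    simp
  have hMH : ∀ j, MH s j = Hmc n κ j := by
    intro j
    unfold MH Hmc
    rw [hcard, esymm_eq_multiset]
  have h := newton_main r hr n hrn s hcard
  rw [hMH, hMH, hMH, esymm_eq_multiset] at h
  refine ⟨h.1, fun heq hne => ?_⟩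
  obtain ⟨c, hc⟩ := h.2 heq hne
  refine ⟨c, fun i => ?_⟩
  exact hc (κ i) (Multiset.mem_map.2 ⟨i, Finset.mem_univ_val _, rfl⟩)

/-- Equality case of the Newton–MacLaurin inequality: for `κ ∈ Γ_l⁺` and `1 ≤ k < l ≤ n`,
`H_{k-1}·H_l = H_k·H_{l-1}` holds iff `κ = c·(1,…,1)` for some constant `c > 0`. -/
theorem newton_maclaurin_eq (n l k : ℕ) (hn : 2 ≤ n) (hl : l ≤ n)
    (hk : 1 ≤ k) (hkl : k < l)
    (κ : Fin n → ℝ) (hκ : ∀ i, 1 ≤ i → i ≤ l → 0 < esymm n κ i) :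
    Hmc n κ (k - 1) * Hmc n κ l = Hmc n κ k * Hmc n κ (l - 1) ↔
      ∃ c : ℝ, 0 < c ∧ ∀ i, κ i = c := by
  have hHpos : ∀ j, j ≤ l → 0 < Hmc n κ j := by
    intro j hj
    rcases Nat.eq_zero_or_pos j with h | h
    · subst h
      have h0 : esymm n κ 0 = 1 := by
        unfold esymm
        rw [Finset.powersetCard_zero, Finset.sum_singleton, Finset.prod_empty]
      unfold Hmc
      rw [h0, Nat.choose_zero_right]
      norm_num
    · unfold Hmc
      exact div_pos (hκ j h hj) (by exact_mod_cast Nat.choose_pos (by omega))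
  constructor
  · intro heq
    -- chain
    have chain : ∀ j : ℕ, k + 1 ≤ j → j ≤ l →
        Hmc n κ j * Hmc n κ k ≤ Hmc n κ (k + 1) * Hmc n κ (j - 1) := by
      intro j hj
      induction j, hj using Nat.le_induction with
      | base =>
        intro _
        simp only [Nat.add_sub_cancel]
        exact le_rfl
      | succ j hj IH =>
        intro hjl
        have hIH := IH (by omega)
        have hN := (newton_fin n j (by omega) (by omega) κ).1
        have hp1 : 0 < Hmc n κ (j - 1) := hHpos _ (by omega)
        have hp2 : 0 < Hmc n κ j := hHpos _ (by omega)
        have hp3 : 0 < Hmc n κ (j + 1) := hHpos _ (by omega)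
        have hpk : 0 < Hmc n κ k := hHpos _ (by omega)
        have hpk1 : 0 < Hmc n κ (k + 1) := hHpos _ (by omega)
        simp only [Nat.add_sub_cancel]
        nlinarith [mul_le_mul_of_nonneg_right hN hpk.le,
          mul_le_mul_of_nonneg_left hIH hp2.le]
    have hchain := chain l (by omega) le_rfl
    have hNk := newton_fin n k hk (by omega) κ
    have hp0 : 0 < Hmc n κ (k - 1) := hHpos _ (by omega)
    have hpk : 0 < Hmc n κ k := hHpos _ (by omega)
    have hpk1 : 0 < Hmc n κ (k + 1) := hHpos _ (by omega)
    have hpl : 0 < Hmc n κ l := hHpos _ (by omega)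
    have hpl1 : 0 < Hmc n κ (l - 1) := hHpos _ (by omega)
    have hkeyeq : Hmc n κ (k - 1) * Hmc n κ (k + 1) = Hmc n κ k ^ 2 := by
      refine le_antisymm hNk.1 ?_
      nlinarith [mul_le_mul_of_nonneg_left hchain hp0.le]
    have hesne : esymm n κ (k + 1) ≠ 0 := (hκ (k + 1) (by omega) (by omega)).ne'
    obtain ⟨c, hc⟩ := hNk.2 hkeyeq hesne
    have hκc : κ = fun _ => c := funext hc
    have hpos1 := hκ 1 le_rfl (by omega)
    rw [hκc] at hpos1
    rw [esymm_const, pow_one] at hpos1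
    have hch : (0:ℝ) < (n.choose 1 : ℝ) := by
      exact_mod_cast Nat.choose_pos (by omega)
    have hcpos : 0 < c := by
      by_contra hcc
      push_neg at hcc
      have hle : (n.choose 1 : ℝ) * c ≤ 0 := mul_nonpos_of_nonneg_of_nonpos hch.le hcc
      linarith
    exact ⟨c, hcpos, hc⟩
  · rintro ⟨c, hc0, hc⟩
    have hκc : κ = fun _ => c := funext hc
    subst hκc
    have hH : ∀ j, j ≤ n → Hmc n (fun _ => c) j = c ^ j := by
      intro j hj
      unfold Hmc
      rw [esymm_const]
      have : ((n.choose j : ℕ) : ℝ) ≠ 0 := by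
        exact_mod_cast (Nat.choose_pos hj).ne'
      field_simp
    rw [hH (k - 1) (by omega), hH l hl, hH k (by omega), hH (l - 1) (by omega)]
    rw [← pow_add, ← pow_add]
    congr 1
    omega
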